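/- Let A = ℚ[X_1, X_1', X_2, X_2', X_3, X_3']/⟨X_1X_1' - (X_2+1), X_2X_2' - (1 + X_1X_3), X_3X_3' - (X_2+1)⟩ (the cluster algebra of Dynkin type A_3 with linear quiver 1 → 2 ← 3). Then the ideal generated by X_1 and X_3 in A is a prime ideal, with quotient A/⟨X_1, X_3⟩ isomorphic to a polynomial ring ℚ[X_1', X_3']. -/

import Mathlib

/-- The defining ideal of the type `A₃` cluster algebra (quiver `1 → 2 ← 3`) in its
Berenstein–Fomin–Zelevinsky presentation: variables `X₁,X₁',X₂,X₂',X₃,X₃'` are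
indexed `0,1,2,3,4,5`, with relations `X₁X₁' = X₂+1`, `X₂X₂' = 1+X₁X₃`,
`X₃X₃' = X₂+1`. -/
noncomputable abbrev a3RelIdeal : Ideal (MvPolynomial (Fin 6) ℚ) :=
  Ideal.span
    {(MvPolynomial.X 0 * MvPolynomial.X 1 - (MvPolynomial.X 2 + 1) : MvPolynomial (Fin 6) ℚ),
      MvPolynomial.X 2 * MvPolynomial.X 3 - (1 + MvPolynomial.X 0 * MvPolynomial.X 4),
      MvPolynomial.X 4 * MvPolynomial.X 5 - (MvPolynomial.X 2 + 1)}

/-- The type `A₃` cluster algebra `A = ℚ[X₁,X₁',X₂,X₂',X₃,X₃']/⟨relations⟩`. -/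
noncomputable abbrev a3ClusterAlg : Type := MvPolynomial (Fin 6) ℚ ⧸ a3RelIdeal


open MvPolynomial Ideal

noncomputable abbrev J13 : Ideal (MvPolynomial (Fin 6) ℚ) :=
  a3RelIdeal ⊔ Ideal.span {X 0, X 4}

lemma mem_J13_rel (p : MvPolynomial (Fin 6) ℚ)
    (hp : p ∈ ({X 0 * X 1 - (X 2 + 1), X 2 * X 3 - (1 + X 0 * X 4),
      X 4 * X 5 - (X 2 + 1)} : Set (MvPolynomial (Fin 6) ℚ))) : p ∈ J13 :=
  le_sup_left (α := Ideal (MvPolynomial (Fin 6) ℚ)) (Ideal.subset_span hp)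

lemma X0_mem : (X 0 : MvPolynomial (Fin 6) ℚ) ∈ J13 :=
  le_sup_right (α := Ideal (MvPolynomial (Fin 6) ℚ)) (Ideal.subset_span (by simp))

lemma X4_mem : (X 4 : MvPolynomial (Fin 6) ℚ) ∈ J13 :=
  le_sup_right (α := Ideal (MvPolynomial (Fin 6) ℚ)) (Ideal.subset_span (by simp))

lemma X2_mem : (X 2 + 1 : MvPolynomial (Fin 6) ℚ) ∈ J13 := by
  have h1 := mem_J13_rel (X 0 * X 1 - (X 2 + 1)) (Or.inl rfl)
  have h0 := X0_mem
  have : (X 2 + 1 : MvPolynomial (Fin 6) ℚ)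
      = X 1 * X 0 - (X 0 * X 1 - (X 2 + 1)) := by ring
  rw [this]
  exact sub_mem (J13.mul_mem_left _ h0) h1

lemma X3_mem : (X 3 + 1 : MvPolynomial (Fin 6) ℚ) ∈ J13 := by
  have h2 : (X 2 * X 3 - (1 + X 0 * X 4) : MvPolynomial (Fin 6) ℚ) ∈ J13 :=
    mem_J13_rel _ (Or.inr (Or.inl rfl))
  have : (X 3 + 1 : MvPolynomial (Fin 6) ℚ)
      = X 3 * (X 2 + 1) - (X 2 * X 3 - (1 + X 0 * X 4)) - (X 0 * X 4) := by ring
  rw [this]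
  exact sub_mem (sub_mem (J13.mul_mem_left _ X2_mem) h2) (J13.mul_mem_right _ X0_mem)

noncomputable def phi13 : MvPolynomial (Fin 6) ℚ →ₐ[ℚ] MvPolynomial (Fin 2) ℚ :=
  aeval ![0, X 0, -1, -1, 0, X 1]

lemma J13_le_ker : J13 ≤ RingHom.ker phi13.toRingHom := by
  rw [sup_le_iff]
  constructor <;> rw [Ideal.span_le] <;> intro p hp <;>
    simp only [Set.mem_insert_iff, Set.mem_singleton_iff] at hp <;>
    [rcases hp with h|h|h; rcases hp with h|h] <;> subst h <;>
    simp [RingHom.mem_ker, phi13] <;> ring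


lemma vec5 : (![0, X 0, -1, -1, 0, X 1] : Fin 6 → MvPolynomial (Fin 2) ℚ) 5 = X 1 := rfl

noncomputable def phibar : MvPolynomial (Fin 6) ℚ ⧸ J13 →ₐ[ℚ] MvPolynomial (Fin 2) ℚ :=
  Ideal.Quotient.liftₐ J13 phi13 (fun a ha => J13_le_ker ha)

lemma phibar_mk (p : MvPolynomial (Fin 6) ℚ) :
    phibar (Ideal.Quotient.mk J13 p) = phi13 p := rfl

noncomputable def psi13 : MvPolynomial (Fin 2) ℚ →ₐ[ℚ] MvPolynomial (Fin 6) ℚ ⧸ J13 :=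
  aeval ![Ideal.Quotient.mk J13 (X 1), Ideal.Quotient.mk J13 (X 5)]

noncomputable def equiv13 : (MvPolynomial (Fin 6) ℚ ⧸ J13) ≃ₐ[ℚ] MvPolynomial (Fin 2) ℚ := by
  refine AlgEquiv.ofAlgHom phibar psi13 ?_ ?_
  · apply MvPolynomial.algHom_ext
    intro i
    fin_cases i <;> simp [phibar_mk, psi13, phi13, Matrix.cons_val_succ, vec5]
  · apply Ideal.Quotient.algHom_ext
    apply MvPolynomial.algHom_ext
    intro i
    have e0 : Ideal.Quotient.mk J13 (X 0) = 0 := Ideal.Quotient.eq_zero_iff_mem.mpr X0_mem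
    have e4 : Ideal.Quotient.mk J13 (X 4) = 0 := Ideal.Quotient.eq_zero_iff_mem.mpr X4_mem
    have e2 : Ideal.Quotient.mk J13 (X 2) = -1 := by
      have := Ideal.Quotient.eq_zero_iff_mem.mpr X2_mem
      rw [map_add, map_one] at this; linear_combination this
    have e3 : Ideal.Quotient.mk J13 (X 3) = -1 := by
      have := Ideal.Quotient.eq_zero_iff_mem.mpr X3_mem
      rw [map_add, map_one] at this; linear_combination this
    fin_cases i <;>
      simp [phibar_mk, psi13, phi13, e0, e2, e3, e4, Matrix.cons_val_succ, vec5]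

/-- In the type `A₃` cluster algebra, the ideal `⟨X₁, X₃⟩` is prime, with quotient
isomorphic to a polynomial ring in the two variables `X₁', X₃'`. -/
theorem stmt13 :
    (Ideal.span {Ideal.Quotient.mk a3RelIdeal (MvPolynomial.X 0),
        Ideal.Quotient.mk a3RelIdeal (MvPolynomial.X 4)}).IsPrime ∧
    Nonempty ((a3ClusterAlg ⧸ Ideal.span {Ideal.Quotient.mk a3RelIdeal (MvPolynomial.X 0),
        Ideal.Quotient.mk a3RelIdeal (MvPolynomial.X 4)}) ≃+*
      MvPolynomial (Fin 2) ℚ) := by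
  have hmap : Ideal.span {Ideal.Quotient.mk a3RelIdeal (MvPolynomial.X 0),
        Ideal.Quotient.mk a3RelIdeal (MvPolynomial.X 4)}
      = (Ideal.span {X 0, X 4}).map (Ideal.Quotient.mk a3RelIdeal) := by
    rw [Ideal.map_span, Set.image_insert_eq, Set.image_singleton]
  have e : (a3ClusterAlg ⧸ Ideal.span {Ideal.Quotient.mk a3RelIdeal (MvPolynomial.X 0),
        Ideal.Quotient.mk a3RelIdeal (MvPolynomial.X 4)}) ≃+* MvPolynomial (Fin 2) ℚ := by
    refine (Ideal.quotEquivOfEq (by rw [hmap]) : _ ≃+* _).trans ?_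
    exact (DoubleQuot.quotQuotEquivQuotSup a3RelIdeal (Ideal.span {X 0, X 4})).trans
      equiv13.toRingEquiv
  refine ⟨?_, ⟨e⟩⟩
  rw [← Ideal.Quotient.isDomain_iff_prime]
  exact e.toMulEquiv.isDomain (MvPolynomial (Fin 2) ℚ)
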